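/- Let K be a field, R = K[x,y]/(f) with f = y^3 - x^4 + p2*x^2*y + p1*x*y + p0*y + q2*x^2 + q1*x + q0, and let F = x^2 + a*y + b*x + c, G = x*y + d*y + e*x + f0 in R with a ≠ 0. Suppose the quotient A = R/(F,G) is 3-dimensional as a K-vector space. Then the images of 1, x, y in A form a K-basis of A. -/

import Mathlib

open MvPolynomial

noncomputable section

/-- The normalized defining polynomial of a `C_{3,4}` curve. -/
def c34poly {K : Type*} [Field K] (p2 p1 p0 q2 q1 q0 : K) : MvPolynomial (Fin 2) K :=
  (X 1) ^ 3 - (X 0) ^ 4 + C p2 * (X 0) ^ 2 * X 1 + C p1 * X 0 * X 1 + C p0 * X 1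
    + C q2 * (X 0) ^ 2 + C q1 * X 0 + C q0

set_option maxHeartbeats 1000000 in
set_option synthInstance.maxHeartbeats 400000 in
theorem stmt1 (K : Type*) [Field K] (p2 p1 p0 q2 q1 q0 a b c d e f0 : K) (ha : a ≠ 0) :
    let R := MvPolynomial (Fin 2) K ⧸ Ideal.span {c34poly p2 p1 p0 q2 q1 q0}
    let π : MvPolynomial (Fin 2) K →+* R := Ideal.Quotient.mk _
    let xR : R := π (X 0)
    let yR : R := π (X 1)
    let Co : K → R := fun u => π (C u)
    let F : R := xR ^ 2 + Co a * yR + Co b * xR + Co c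
    let G : R := xR * yR + Co d * yR + Co e * xR + Co f0
    let A := R ⧸ Ideal.span {F, G}
    let ρ : R →+* A := Ideal.Quotient.mk _
    -- suppose `A = R/⟨F,G⟩` is 3-dimensional over `K`
    Module.finrank K A = 3 →
    -- then the images of 1, x, y form a K-basis of A
    (LinearIndependent K ![(1 : A), ρ xR, ρ yR]
      ∧ Submodule.span K {(1 : A), ρ xR, ρ yR} = ⊤) := by
  intro R π xR yR Co F G A ρ hdim
  set Xv : A := ρ xR with hXv
  set Yv : A := ρ yR with hYv
  set α : K →+* A := (algebraMap K A) with hα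
  have hco : ∀ u : K, ρ (Co u) = α u := fun u => rfl
  have hF0 : ρ F = 0 := by
    rw [Ideal.Quotient.eq_zero_iff_mem]
    exact Ideal.subset_span (Set.mem_insert _ _)
  have hG0 : ρ G = 0 := by
    rw [Ideal.Quotient.eq_zero_iff_mem]
    exact Ideal.subset_span (Set.mem_insert_of_mem _ rfl)
  have hF : Xv ^ 2 + α a * Yv + α b * Xv + α c = 0 := by
    have := hF0
    simp only [F, RingHom.map_add, RingHom.map_mul, RingHom.map_pow, hco] at this
    exact this
  have hG : Xv * Yv + α d * Yv + α e * Xv + α f0 = 0 := by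
    have := hG0
    simp only [G, RingHom.map_add, RingHom.map_mul, hco] at this
    exact this
  set S : Submodule K A := Submodule.span K {(1 : A), Xv, Yv} with hS
  have h1 : (1 : A) ∈ S := Submodule.subset_span (Set.mem_insert _ _)
  have hx : Xv ∈ S := Submodule.subset_span (Set.mem_insert_of_mem _ (Set.mem_insert _ _))
  have hy : Yv ∈ S := Submodule.subset_span (Set.mem_insert_of_mem _ (Set.mem_insert_of_mem _ rfl))
  have hsmul : ∀ (u : K) (z : A), z ∈ S → α u * z ∈ S := by
    intro u z hz
    have : α u * z = u • z := (Algebra.smul_def u z).symm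
    rw [this]
    exact S.smul_mem u hz
  have hxx : Xv * Xv ∈ S := by
    have : Xv * Xv = -(α a * Yv) - α b * Xv - α c * 1 := by
      linear_combination hF
    rw [this]
    exact S.sub_mem (S.sub_mem (S.neg_mem (hsmul a Yv hy)) (hsmul b Xv hx)) (hsmul c 1 h1)
  have hxy : Xv * Yv ∈ S := by
    have : Xv * Yv = -(α d * Yv) - α e * Xv - α f0 * 1 := by
      linear_combination hG
    rw [this]
    exact S.sub_mem (S.sub_mem (S.neg_mem (hsmul d Yv hy)) (hsmul e Xv hx)) (hsmul f0 1 h1)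
  have hyy : Yv * Yv ∈ S := by
    have key : α a * (Yv * Yv) = α e * (Xv * Xv) + (α d - α b) * (Xv * Yv)
        - α c * Yv + α f0 * Xv := by
      linear_combination Yv * hF - Xv * hG
    have ha' : α a⁻¹ * α a = 1 := by
      rw [← map_mul, inv_mul_cancel₀ ha, map_one]
    have : Yv * Yv = α a⁻¹ * (α a * (Yv * Yv)) := by
      rw [← mul_assoc, ha']; exact (@one_mul A _ (Yv * Yv)).symm
    rw [this, key]
    refine hsmul _ _ (S.add_mem (S.sub_mem (S.add_mem (hsmul e _ hxx) ?_) (hsmul c _ hy))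
      (hsmul f0 _ hx))
    rw [← map_sub]
    exact hsmul _ _ hxy
  -- multiplication closure by generators
  have mulX : ∀ z ∈ S, z * Xv ∈ S := by
    intro z hz
    refine Submodule.span_induction ?_ ?_ ?_ ?_ hz
    · rintro t (rfl | rfl | rfl)
      · convert hx using 1; exact @one_mul A _ Xv
      · exact hxx
      · convert hxy using 1; exact @mul_comm A _ Yv Xv
    · convert S.zero_mem using 1; exact @zero_mul A _ Xv
    · intro s t _ _ hs ht; rw [add_mul]; exact S.add_mem hs ht
    · intro u s _ hs; rw [smul_mul_assoc]; exact S.smul_mem u hs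
  have mulY : ∀ z ∈ S, z * Yv ∈ S := by
    intro z hz
    refine Submodule.span_induction ?_ ?_ ?_ ?_ hz
    · rintro t (rfl | rfl | rfl)
      · convert hy using 1; exact @one_mul A _ Yv
      · exact hxy
      · exact hyy
    · convert S.zero_mem using 1; exact @zero_mul A _ Yv
    · intro s t _ _ hs ht; rw [add_mul]; exact S.add_mem hs ht
    · intro u s _ hs; rw [smul_mul_assoc]; exact S.smul_mem u hs
  have htop : S = ⊤ := by
    rw [eq_top_iff]
    rintro z -
    obtain ⟨r, rfl⟩ := Ideal.Quotient.mk_surjective (I := Ideal.span {F, G}) z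
    obtain ⟨p, rfl⟩ := Ideal.Quotient.mk_surjective
      (I := Ideal.span {c34poly p2 p1 p0 q2 q1 q0}) r
    induction p using MvPolynomial.induction_on with
    | C u =>
      have : ρ (π (C u)) = α u * 1 := (hco u).trans (@mul_one A _ (α u)).symm
      rw [this]
      exact hsmul u 1 h1
    | add p q hp hq =>
      rw [map_add, map_add]
      exact S.add_mem hp hq
    | mul_X p i hp =>
      rw [map_mul, map_mul]
      fin_cases i
      · exact mulX _ hp
      · exact mulY _ hp
  have hrange : Set.range ![(1 : A), Xv, Yv] = {(1 : A), Xv, Yv} := by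
    simp only [Matrix.range_cons, Matrix.range_empty, Set.union_empty,
      Set.singleton_union, Set.union_singleton]
    rw [Set.pair_comm Yv Xv]
  have hle : ⊤ ≤ Submodule.span K (Set.range ![(1 : A), Xv, Yv]) := by
    rw [hrange, ← hS, htop]
  have hcard : Fintype.card (Fin 3) = Module.finrank K A := by
    simp [hdim]
  exact ⟨linearIndependent_of_top_le_span_of_card_eq_finrank hle hcard, htop⟩
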